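/- Let m > 1, 0 ≤ s < r < ∞, 0 ≤ γ < ∞, and let I = {t : s < t ≤ r}. Suppose f : I → (0,∞) satisfies, for every t ∈ I, limsup_{u → t⁻} f(u) ≤ f(t) and f(t) ≤ f(r) + γ ∫_t^r u⁻¹ f(u)^{1-1/m} du. Then for every t ∈ I, f(t) ≤ (1 + (γ/m) f(r)^{-1/m} log(r/t))^m · f(r). -/

import Mathlib

open Filter Set MeasureTheory
open scoped Topology

private lemma aux_key (m s r γ A' : ℝ) (f : ℝ → ℝ)
    (hm : 1 < m) (hs : 0 ≤ s) (hsr : s < r) (hγ : 0 < γ)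
    (hpos : ∀ t ∈ Set.Ioc s r, 0 < f t)
    (hlsc : ∀ t ∈ Set.Ioc s r, limsup f (𝓝[Set.Ioo s t] t) ≤ f t)
    (hineq : ∀ t ∈ Set.Ioc s r,
      f t ≤ f r + γ * ∫ u in Set.Ioo t r, u⁻¹ * f u ^ (1 - 1 / m))
    (hA' : f r < A') :
    ∀ t ∈ Set.Ioc s r,
      f t ≤ (A' ^ (1/m) + (γ/m) * (Real.log r - Real.log t)) ^ m := by
  have hm0 : (0:ℝ) < m := lt_trans one_pos hm
  have hmne : m ≠ 0 := ne_of_gt hm0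
  have hrpos : 0 < r := lt_of_le_of_lt hs hsr
  have hA : 0 < f r := hpos r ⟨hsr, le_rfl⟩
  have hA'pos : 0 < A' := lt_trans hA hA'
  set ε := A' - f r with hεdef
  have hεpos : 0 < ε := sub_pos.2 hA'
  set ψ : ℝ → ℝ := fun u => A' ^ (1/m) + (γ/m) * (Real.log r - Real.log u) with hψdef
  set g : ℝ → ℝ := fun u => u⁻¹ * f u ^ (1 - 1/m) with hgdef
  have hψpos : ∀ u, 0 < u → u ≤ r → 0 < ψ u := by
    intro u hu hur
    have h1 : 0 < A' ^ (1/m) := Real.rpow_pos_of_pos hA'pos _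
    have h2 : Real.log u ≤ Real.log r := Real.log_le_log hu hur
    have h3 : 0 ≤ (γ/m) * (Real.log r - Real.log u) :=
      mul_nonneg (by positivity) (by linarith)
    simp only [hψdef]; linarith
  have hΨr : ψ r ^ m = A' := by
    have h : ψ r = A' ^ (1/m) := by simp [hψdef]
    rw [h, ← Real.rpow_mul hA'pos.le, one_div_mul_cancel hmne, Real.rpow_one]
  -- key step: the integral inequality improves the bound by ε
  have hstep : ∀ t ∈ Set.Ioc s r, (∀ u ∈ Set.Ioo t r, f u ≤ ψ u ^ m) →
      f t ≤ ψ t ^ m - ε := by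
    intro t ht hub
    have htpos : 0 < t := lt_of_le_of_lt hs ht.1
    have hψt : 0 < ψ t := hψpos t htpos ht.2
    have hψtm : A' ≤ ψ t ^ m := by
      have h1 : A' ^ (1/m) ≤ ψ t := by
        have h2 : Real.log t ≤ Real.log r := Real.log_le_log htpos ht.2
        have h3 : 0 ≤ (γ/m) * (Real.log r - Real.log t) :=
          mul_nonneg (by positivity) (by linarith)
        simp only [hψdef]; linarith
      calc A' = (A' ^ (1/m)) ^ m := by
            rw [← Real.rpow_mul hA'pos.le, one_div_mul_cancel hmne, Real.rpow_one]
        _ ≤ ψ t ^ m := Real.rpow_le_rpow (Real.rpow_nonneg hA'pos.le _) h1 hm0.le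
    by_cases hint : IntegrableOn g (Set.Ioo t r) volume
    · set G : ℝ → ℝ := fun u => u⁻¹ * ψ u ^ (m - 1) with hGdef
      have hGcont : ContinuousOn G (Set.Icc t r) := by
        have h0 : ∀ u ∈ Set.Icc t r, u ≠ 0 := fun u hu =>
          ne_of_gt (lt_of_lt_of_le htpos hu.1)
        apply ContinuousOn.mul (continuousOn_id.inv₀ h0)
        apply ContinuousOn.rpow_const
        · exact continuousOn_const.add (continuousOn_const.mul
            (continuousOn_const.sub (Real.continuousOn_log.mono
              (fun u hu => h0 u hu))))
        · intro u hu
          exact Or.inl (ne_of_gt (hψpos u (lt_of_lt_of_le htpos hu.1) hu.2))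
      have hGint : IntervalIntegrable G volume t r :=
        hGcont.intervalIntegrable_of_Icc ht.2
      have hderiv : ∀ u ∈ Set.uIcc t r,
          HasDerivAt (fun u => -(γ⁻¹) * ψ u ^ m) (G u) u := by
        intro u hu
        rw [Set.uIcc_of_le ht.2] at hu
        have hu0 : 0 < u := lt_of_lt_of_le htpos hu.1
        have hψu : 0 < ψ u := hψpos u hu0 hu.2
        have hlog : HasDerivAt Real.log u⁻¹ u := Real.hasDerivAt_log (ne_of_gt hu0)
        have h1 : HasDerivAt ψ (-((γ/m) * u⁻¹)) u := by
          have h := (((hasDerivAt_const u (Real.log r)).sub hlog).const_mul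
            (γ/m)).const_add (A' ^ (1/m))
          exact h.congr_deriv (by ring)
        have h2 := h1.rpow_const (p := m) (Or.inl (ne_of_gt hψu))
        have h3 := h2.const_mul (-(γ⁻¹))
        refine h3.congr_deriv ?_
        simp only [hGdef]
        field_simp
      have hcalc : ∫ u in t..r, G u =
          -(γ⁻¹) * ψ r ^ m - -(γ⁻¹) * ψ t ^ m :=
        intervalIntegral.integral_eq_sub_of_hasDerivAt hderiv hGint
      have hGIoo : ∫ u in Set.Ioo t r, G u = (ψ t ^ m - A') / γ := by
        rw [← MeasureTheory.integral_Ioc_eq_integral_Ioo,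
          ← intervalIntegral.integral_of_le ht.2, hcalc, hΨr]
        field_simp
        ring
      have hGint' : IntegrableOn G (Set.Ioo t r) volume :=
        hGint.1.mono_set Set.Ioo_subset_Ioc_self
      have hmono : ∫ u in Set.Ioo t r, g u ≤ ∫ u in Set.Ioo t r, G u := by
        apply MeasureTheory.setIntegral_mono_on hint hGint' measurableSet_Ioo
        intro u hu
        have hu0 : 0 < u := lt_trans htpos hu.1
        have hfu : 0 < f u := hpos u ⟨lt_trans ht.1 hu.1, hu.2.le⟩
        have hψu : 0 < ψ u := hψpos u hu0 hu.2.le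
        have hexp : (0:ℝ) ≤ 1 - 1/m := by
          have : 1/m < 1 := by
            rw [div_lt_one hm0]; exact hm
          linarith
        have h1 : f u ^ (1 - 1/m) ≤ (ψ u ^ m) ^ (1 - 1/m) :=
          Real.rpow_le_rpow hfu.le (hub u hu) hexp
        have h2 : (ψ u ^ m) ^ (1 - 1/m) = ψ u ^ (m - 1) := by
          rw [← Real.rpow_mul hψu.le]
          congr 1
          field_simp
        simp only [hgdef, hGdef]
        rw [← h2]
        exact mul_le_mul_of_nonneg_left h1 (inv_nonneg.2 hu0.le)
      have h := hineq t ht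
      have hfin : f r + γ * ∫ u in Set.Ioo t r, g u ≤ ψ t ^ m - ε := by
        have h4 : γ * ∫ u in Set.Ioo t r, g u ≤ γ * ((ψ t ^ m - A') / γ) := by
          apply mul_le_mul_of_nonneg_left _ hγ.le
          rw [← hGIoo]; exact hmono
        have h5 : γ * ((ψ t ^ m - A') / γ) = ψ t ^ m - A' := by
          field_simp
        rw [hεdef]; linarith
      exact le_trans h hfin
    · have h0 : ∫ u in Set.Ioo t r, g u = 0 := MeasureTheory.integral_undef hint
      have h := hineq t ht
      rw [h0] at h
      rw [hεdef]; linarith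
  -- boundedness from the left
  have hbdd : ∀ t ∈ Set.Ioc s r, IsBoundedUnder (· ≤ ·) (𝓝[Set.Ioo s t] t) f := by
    intro t ht
    by_cases hcase : ∃ u₀ ∈ Set.Ioo s t, IntegrableOn g (Set.Ioo u₀ r) volume
    · obtain ⟨u₀, hu₀, hintu₀⟩ := hcase
      refine ⟨f r + γ * ∫ u in Set.Ioo u₀ r, g u, ?_⟩
      rw [eventually_map]
      filter_upwards [self_mem_nhdsWithin,
        eventually_nhdsWithin_of_eventually_nhds (Ioi_mem_nhds hu₀.2)] with u hu hgt
      have hu' : u ∈ Set.Ioc s r := ⟨hu.1, le_trans hu.2.le ht.2⟩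
      have h1 := hineq u hu'
      have h2 : ∫ v in Set.Ioo u r, g v ≤ ∫ v in Set.Ioo u₀ r, g v := by
        apply MeasureTheory.setIntegral_mono_set hintu₀
        · refine (ae_restrict_iff' measurableSet_Ioo).2 (Filter.Eventually.of_forall ?_)
          intro v hv
          have hv0 : 0 < v := lt_of_le_of_lt hs (lt_trans hu₀.1 hv.1)
          have hfv : 0 < f v := hpos v ⟨lt_trans hu₀.1 hv.1, hv.2.le⟩
          simp only [hgdef, Pi.zero_apply]
          positivity
        · exact HasSubset.Subset.eventuallyLE (Set.Ioo_subset_Ioo_left hgt.le)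
      have h3 : γ * ∫ v in Set.Ioo u r, g v ≤ γ * ∫ v in Set.Ioo u₀ r, g v :=
        mul_le_mul_of_nonneg_left h2 hγ.le
      linarith
    · push_neg at hcase
      refine ⟨f r, ?_⟩
      rw [eventually_map]
      filter_upwards [self_mem_nhdsWithin] with u hu
      have h0 : ∫ v in Set.Ioo u r, g v = 0 :=
        MeasureTheory.integral_undef (hcase u hu)
      have h := hineq u ⟨hu.1, le_trans hu.2.le ht.2⟩
      rw [h0] at h
      linarith
  -- extension to the left using upper semicontinuity
  have hext : ∀ t ∈ Set.Ioc s r, f t ≤ ψ t ^ m - ε →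
      ∃ t', s ≤ t' ∧ t' < t ∧ ∀ u ∈ Set.Ioo t' t, f u ≤ ψ u ^ m := by
    intro t ht hft
    have htpos : 0 < t := lt_of_le_of_lt hs ht.1
    have hlim := hlsc t ht
    have h1 : ∀ᶠ u in 𝓝[Set.Ioo s t] t, f u < ψ t ^ m - ε/2 :=
      eventually_lt_of_limsup_lt (lt_of_le_of_lt hlim (by linarith)) (hbdd t ht)
    have hcont : ContinuousAt (fun u => ψ u ^ m) t := by
      have hlogc : ContinuousAt Real.log t := Real.continuousAt_log (ne_of_gt htpos)
      have hψc : ContinuousAt ψ t :=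
        continuousAt_const.add (continuousAt_const.mul (continuousAt_const.sub hlogc))
      exact hψc.rpow_const (Or.inl (ne_of_gt (hψpos t htpos ht.2)))
    have h2 : ∀ᶠ u in 𝓝 t, ψ t ^ m - ε/2 < ψ u ^ m := by
      have hmem : Set.Ioi (ψ t ^ m - ε/2) ∈ 𝓝 (ψ t ^ m) := Ioi_mem_nhds (by linarith)
      exact hcont hmem
    have h3 : ∀ᶠ u in 𝓝[Set.Ioo s t] t, f u ≤ ψ u ^ m := by
      filter_upwards [h1, eventually_nhdsWithin_of_eventually_nhds h2] with u hu1 hu2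
      linarith
    rw [eventually_nhdsWithin_iff, Metric.eventually_nhds_iff] at h3
    obtain ⟨δ, hδ, h3⟩ := h3
    refine ⟨max s (t - δ/2), le_max_left _ _, max_lt ht.1 (by linarith), ?_⟩
    intro u hu
    have hu1 : t - δ/2 < u := lt_of_le_of_lt (le_max_right s _) hu.1
    have hu2 : s < u := lt_of_le_of_lt (le_max_left s _) hu.1
    apply h3 _ ⟨hu2, hu.2⟩
    rw [Real.dist_eq, abs_lt]
    constructor <;> linarith [hu.2]
  -- main connectedness argument via sInf
  set T := {t | t ∈ Set.Ioc s r ∧ ∀ u ∈ Set.Icc t r, f u ≤ ψ u ^ m} with hTdef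
  have hrT : r ∈ T := by
    refine ⟨⟨hsr, le_rfl⟩, fun u hu => ?_⟩
    have : u = r := le_antisymm hu.2 hu.1
    rw [this, hΨr]; exact hA'.le
  have hTbdd : BddBelow T := ⟨s, fun t ht => ht.1.1.le⟩
  set t₀ := sInf T with ht₀def
  have ht₀s : s ≤ t₀ := le_csInf ⟨r, hrT⟩ (fun t ht => ht.1.1.le)
  have ht₀r : t₀ ≤ r := csInf_le hTbdd hrT
  have habove : ∀ u ∈ Set.Ioc s r, t₀ < u → f u ≤ ψ u ^ m := by
    intro u hu hlt
    obtain ⟨t, htT, htu⟩ := exists_lt_of_csInf_lt ⟨r, hrT⟩ hlt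
    exact htT.2 u ⟨htu.le, hu.2⟩
  have ht₀eq : t₀ = s := by
    by_contra hne
    have ht₀ : t₀ ∈ Set.Ioc s r := ⟨lt_of_le_of_ne ht₀s (Ne.symm hne), ht₀r⟩
    have hft₀ : f t₀ ≤ ψ t₀ ^ m - ε := by
      apply hstep t₀ ht₀
      intro u hu
      exact habove u ⟨lt_trans ht₀.1 hu.1, hu.2.le⟩ hu.1
    obtain ⟨t', ht's, ht't, ht'⟩ := hext t₀ ht₀ hft₀
    have hmid : (t' + t₀)/2 ∈ T := by
      constructor
      · exact ⟨lt_of_le_of_lt ht's (by linarith), by linarith⟩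
      · intro u hu
        rcases lt_trichotomy u t₀ with h | h | h
        · exact ht' u ⟨lt_of_lt_of_le (by linarith) hu.1, h⟩
        · rw [h]; linarith
        · exact habove u ⟨lt_trans ht₀.1 h, hu.2⟩ h
    have := csInf_le hTbdd hmid
    linarith
  intro t ht
  exact habove t ht (ht₀eq ▸ ht.1)

/-- Lemma `lemma:calculus`: a logarithmic Gronwall-type estimate. -/
theorem stmt0 (m s r γ : ℝ) (f : ℝ → ℝ)
    (hm : 1 < m) (hs : 0 ≤ s) (hsr : s < r) (hγ : 0 ≤ γ)
    (hpos : ∀ t ∈ Set.Ioc s r, 0 < f t)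
    (hlsc : ∀ t ∈ Set.Ioc s r, limsup f (𝓝[Set.Ioo s t] t) ≤ f t)
    (hineq : ∀ t ∈ Set.Ioc s r,
      f t ≤ f r + γ * ∫ u in Set.Ioo t r, u⁻¹ * f u ^ (1 - 1 / m)) :
    ∀ t ∈ Set.Ioc s r,
      f t ≤ (1 + (γ / m) * f r ^ (-(1 / m)) * Real.log (r / t)) ^ m * f r := by
  intro t ht
  have hA : 0 < f r := hpos r ⟨hsr, le_rfl⟩
  have htpos : 0 < t := lt_of_le_of_lt hs ht.1
  have hrpos : 0 < r := lt_of_le_of_lt hs hsr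
  have hm0 : (0:ℝ) < m := lt_trans one_pos hm
  have hmne : m ≠ 0 := ne_of_gt hm0
  rcases eq_or_lt_of_le hγ with hγ0 | hγpos
  · have h := hineq t ht
    rw [← hγ0] at h ⊢
    simp only [zero_mul, add_zero] at h
    simpa [Real.one_rpow] using h
  · set L := Real.log r - Real.log t with hLdef
    have hL : 0 ≤ L := sub_nonneg.2 (Real.log_le_log htpos ht.2)
    have hkey : ∀ A', f r < A' → f t ≤ (A' ^ (1/m) + (γ/m) * L) ^ m :=
      fun A' h => aux_key m s r γ A' f hm hs hsr hγpos hpos hlsc hineq h t ht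
    have hbase : 0 ≤ f r ^ (1/m) + (γ/m) * L := by positivity
    have htarget : (1 + γ/m * f r ^ (-(1/m)) * Real.log (r/t)) ^ m * f r
        = (f r ^ (1/m) + (γ/m) * L) ^ m := by
      rw [Real.log_div (ne_of_gt hrpos) (ne_of_gt htpos), ← hLdef]
      have hone : f r ^ (1/m) * f r ^ (-(1/m)) = 1 := by
        rw [← Real.rpow_add hA]; simp
      have h1 : 1 + γ/m * f r ^ (-(1/m)) * L
          = (f r ^ (1/m) + (γ/m)*L) * f r ^ (-(1/m)) := by
        rw [add_mul, hone]; ring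
      rw [h1, Real.mul_rpow hbase (Real.rpow_nonneg hA.le _),
        ← Real.rpow_mul hA.le]
      have h2 : -(1/m) * m = -1 := by field_simp
      rw [h2, Real.rpow_neg_one]
      field_simp
    rw [htarget]
    have hcont : ContinuousAt (fun A' : ℝ => (A' ^ (1/m) + (γ/m) * L) ^ m) (f r) := by
      have hc1 : ContinuousAt (fun A' : ℝ => A' ^ (1/m)) (f r) :=
        Real.continuousAt_rpow_const (f r) (1/m) (Or.inl (ne_of_gt hA))
      exact (hc1.add continuousAt_const).rpow_const (Or.inr hm0.le)
    have htend : Tendsto (fun A' : ℝ => (A' ^ (1/m) + (γ/m) * L) ^ m)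
        (𝓝[>] (f r)) (𝓝 ((f r ^ (1/m) + (γ/m) * L) ^ m)) :=
      hcont.continuousWithinAt
    refine ge_of_tendsto htend ?_
    filter_upwards [self_mem_nhdsWithin] with A' hA'
    exact hkey A' hA'
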